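/- Let R be a commutative ring, A a commutative R-algebra, L an R-module with an R-bilinear alternating bracket ⁅·,·⁆ (not assumed to satisfy the Jacobi identity), and θ : L → Der_R(A) an R-linear map that is compatible with the brackets, i.e., θ(⁅x,y⁆) = ⁅θ(x),θ(y)⁆ (commutator of derivations) for all x, y ∈ L. Then for every R-linear map φ : L → A and all x, y, z ∈ L, the twice-iterated CCE operator evaluates to the Jacobiator: (d(dφ))(x,y,z) = φ(⁅⁅x,y⁆,z⁆ + ⁅⁅y,z⁆,x⁆ + ⁅⁅z,x⁆,y⁆). -/

import Mathlib

/-- The Cartan–Chevalley–Eilenberg operator, evaluated pointwise.  For an alternating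
`n`-form `f`, `cce θ br f` is the `(n+1)`-form
`(df)(x₁,…,x_{n+1}) = Σᵢ (−1)^{i+1} θ(xᵢ)(f(x₁,…,x̂ᵢ,…)) + Σ_{i<j} (−1)^{i+j} f(⁅xᵢ,xⱼ⁆, …,x̂ᵢ,…,x̂ⱼ,…)`
(1-based indices).  The second sum is encoded by replacing the entry at slot `i` by the
bracket and deleting slot `j`; for alternating `f` moving the bracket entry from slot `i`
to the front costs `(-1)^i` (0-based), which accounts for the sign `(-1)^j` below. -/
noncomputable def cce {R A L : Type*} [CommRing R] [CommRing A] [Algebra R A]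
    (θ : L → Derivation R A A) (br : L → L → L)
    {n : ℕ} (f : (Fin n → L) → A) (x : Fin (n + 1) → L) : A :=
  (∑ i : Fin (n + 1), (-1 : ℤ) ^ (i : ℕ) • θ (x i) (f (x ∘ i.succAbove)))
    + ∑ i : Fin (n + 1), ∑ j : Fin (n + 1),
        if (i : ℕ) < (j : ℕ) then
          (-1 : ℤ) ^ (j : ℕ) • f (Function.update x i (br (x i) (x j)) ∘ j.succAbove)
        else 0

/-- For an `R`-bilinear alternating bracket (not assumed to satisfy the Jacobi identity)
and an `R`-linear `θ : L → Der_R(A)` compatible with the brackets, the twice iterated CCE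
operator on an `R`-linear `φ : L → A` evaluates to `φ` of the Jacobiator. -/
theorem cce_cce_eq_jacobiator {R A L : Type*} [CommRing R] [CommRing A] [Algebra R A]
    [AddCommGroup L] [Module R L]
    (br : L →ₗ[R] L →ₗ[R] L) (hbr : ∀ x : L, br x x = 0)
    (θ : L →ₗ[R] Derivation R A A)
    (hθ : ∀ x y : L, θ (br x y) = ⁅θ x, θ y⁆)
    (φ : L →ₗ[R] A) (x y z : L) :
    cce (fun w => θ w) (fun u v => br u v)
        (cce (fun w => θ w) (fun u v => br u v) (fun t : Fin 1 → L => φ (t 0)))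
        ![x, y, z] =
      φ (br (br x y) z + br (br y z) x + br (br z x) y) := by
  have anti : ∀ a b : L, br a b = - br b a := fun a b => by
    have h := hbr (a + b)
    simp only [map_add, LinearMap.add_apply, hbr, zero_add, add_zero] at h
    exact eq_neg_of_add_eq_zero_left (by rw [add_comm]; exact h)
  simp only [cce, Fin.sum_univ_succ, Fin.sum_univ_zero, Fin.isValue]
  norm_num [Fin.succAbove, Fin.lt_def, Function.comp, Function.update, hθ]
  simp only [show ((2 : Fin 3) = 0) ↔ False from by decide, if_false, show ![x, y, z] 2 = z from rfl,
    Derivation.commutator_apply]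
  rw [anti x (br y z), anti x z]
  simp only [map_neg, LinearMap.neg_apply, Derivation.coe_neg, Pi.neg_apply, map_add]
  abel
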